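/- For all positive integers m and nonnegative integers a, b with a ≠ b: ∑_{i=1}^m H_{i+b-1}/(i+a) + ∑_{i=1}^m H_{i+a-1}/(i+b) = H_{m+a}·H_{m+b} − H_a·H_b + (H_{m+a} − H_{m+b} − H_a + H_b)/(a−b), where H_n = ∑_{k=1}^n 1/k. -/

import Mathlib

open Finset

noncomputable def H (n : ℕ) : ℝ := ∑ k ∈ Finset.range n, 1 / ((k : ℝ) + 1)
noncomputable def H2 (n : ℕ) : ℝ := ∑ k ∈ Finset.range n, 1 / ((k : ℝ) + 1) ^ 2

lemma H_succ (n : ℕ) : H (n + 1) = H n + 1 / ((n : ℝ) + 1) := by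
  simp [H, Finset.sum_range_succ]

theorem stmt6 (m a b : ℕ) (hm : 0 < m) (hab : a ≠ b) :
    (∑ i ∈ Finset.Icc 1 m, H (i + b - 1) / ((i : ℝ) + a))
      + (∑ i ∈ Finset.Icc 1 m, H (i + a - 1) / ((i : ℝ) + b))
      = H (m + a) * H (m + b) - H a * H b
        + (H (m + a) - H (m + b) - H a + H b) / ((a : ℝ) - b) := by
  have hab' : (a : ℝ) - b ≠ 0 := sub_ne_zero.mpr (by exact_mod_cast hab)
  clear hm
  induction m with
  | zero => simp
  | succ m ih =>
    rw [Finset.sum_Icc_succ_top (by omega : 1 ≤ m + 1),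
        Finset.sum_Icc_succ_top (by omega : 1 ≤ m + 1)]
    have h1 : m + 1 + b - 1 = m + b := by omega
    have h2 : m + 1 + a - 1 = m + a := by omega
    rw [h1, h2, add_add_add_comm, ih]
    have ha : H (m + 1 + a) = H (m + a) + 1 / ((m : ℝ) + a + 1) := by
      have e : m + 1 + a = (m + a) + 1 := by omega
      rw [e, H_succ]; push_cast; ring_nf
    have hb : H (m + 1 + b) = H (m + b) + 1 / ((m : ℝ) + b + 1) := by
      have e : m + 1 + b = (m + b) + 1 := by omega
      rw [e, H_succ]; push_cast; ring_nf
    rw [ha, hb]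
    have hA : ((m : ℝ) + a + 1) ≠ 0 := by positivity
    have hB : ((m : ℝ) + b + 1) ≠ 0 := by positivity
    push_cast
    field_simp
    ring
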